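/- Assume every request path in R is simple. For Y ∈ ℝ^{V×C}, define G(Y) ∈ ℝ^{V×C} by G(Y)_{ui} = ∑_{(i,p)∈R : u appears in p} λ_{(i,p)} ∑_{k'=k_p(u)}^{|p|−1} w(p_{k'+1}, p_{k'})·𝟙{∑_{ℓ=1}^{k'} y_{p_ℓ i} ≤ 1}, where k_p(u) is the (unique) position of u in p. Then G(Y) is a supergradient of the concave function L at Y: for all Y' ∈ ℝ^{V×C}, L(Y') ≤ L(Y) + ∑_{u∈V, i∈C} G(Y)_{ui}·(y'_{ui} − y_{ui}). -/

import Mathlib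

open Finset

/-- Expected caching gain `F(Y)` of the caching network model:
`F(Y) = ∑_{(i,p)∈R} λ_{(i,p)} ∑_{k=1}^{|p|−1} w(p_{k+1}, p_k)·(1 − ∏_{k'=1}^{k} (1 − y_{p_{k'} i}))`
(indices shifted to be 0-based). -/
noncomputable def cachingGain {V C : Type*} [Fintype V] [Fintype C] [Inhabited V]
    (R : Finset (C × List V)) (lam : C × List V → ℝ) (w : V → V → ℝ)
    (Y : V → C → ℝ) : ℝ :=
  ∑ r ∈ R, lam r *
    ∑ k ∈ Finset.range (r.2.length - 1),
      w (r.2.getD (k + 1) default) (r.2.getD k default) *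
        (1 - ∏ k' ∈ Finset.range (k + 1), (1 - Y (r.2.getD k' default) r.1))

/-- Concave relaxation `L(Y)`:
`L(Y) = ∑_{(i,p)∈R} λ_{(i,p)} ∑_{k=1}^{|p|−1} w(p_{k+1}, p_k)·min{1, ∑_{k'=1}^{k} y_{p_{k'} i}}`. -/
noncomputable def relaxedGain {V C : Type*} [Fintype V] [Fintype C] [Inhabited V]
    (R : Finset (C × List V)) (lam : C × List V → ℝ) (w : V → V → ℝ)
    (Y : V → C → ℝ) : ℝ :=
  ∑ r ∈ R, lam r *
    ∑ k ∈ Finset.range (r.2.length - 1),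
      w (r.2.getD (k + 1) default) (r.2.getD k default) *
        min 1 (∑ k' ∈ Finset.range (k + 1), Y (r.2.getD k' default) r.1)

/-- Membership in the relaxed constraint set `D2`. -/
def memD2 {V C : Type*} [Fintype C]
    (c : V → ℕ) (S : C → Finset V) (Y : V → C → ℝ) : Prop :=
  (∀ v i, 0 ≤ Y v i ∧ Y v i ≤ 1) ∧
  (∀ v, ∑ i, Y v i = (c v : ℝ)) ∧
  (∀ i, ∀ v ∈ S i, Y v i = 1)

/-- Pointwise supergradient inequality for `min 1 ·`. -/
lemma min_superg (s d : ℝ) :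
    min 1 (s + d) ≤ min 1 s + (if s ≤ 1 then (1:ℝ) else 0) * d := by
  by_cases h : s ≤ 1
  · rw [if_pos h, min_eq_right h, one_mul]
    exact min_le_right _ _
  · rw [if_neg h, zero_mul, add_zero, min_eq_left (le_of_not_ge h)]
    exact min_le_left _ _

lemma sum_swap3 {α β γ : Type*} [Fintype α] [Fintype β] (s : Finset γ) (f : α → β → γ → ℝ) :
    ∑ a : α, ∑ b : β, ∑ c ∈ s, f a b c = ∑ c ∈ s, ∑ a : α, ∑ b : β, f a b c :=
  calc ∑ a : α, ∑ b : β, ∑ c ∈ s, f a b c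
      = ∑ a : α, ∑ c ∈ s, ∑ b : β, f a b c :=
        Finset.sum_congr rfl fun a _ => Finset.sum_comm
    _ = ∑ c ∈ s, ∑ a : α, ∑ b : β, f a b c := Finset.sum_comm

/-- Swap a triangular double sum. -/
lemma aux_swap (n : ℕ) (f g : ℕ → ℝ) :
    ∑ l ∈ Finset.range (n + 1), g l * ∑ k ∈ Finset.Ico l n, f k
      = ∑ k ∈ Finset.range n, f k * ∑ l ∈ Finset.range (k + 1), g l := by
  simp_rw [Finset.mul_sum]
  rw [Finset.sum_comm' (s' := fun k => Finset.range (k + 1)) (t' := Finset.range n)]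
  · exact Finset.sum_congr rfl fun k _ => Finset.sum_congr rfl fun l _ => mul_comm _ _
  · intro l k
    simp only [Finset.mem_range, Finset.mem_Ico]
    omega

lemma aux_swap' (n : ℕ) (c : ℝ) (f g : ℕ → ℝ) :
    ∑ l ∈ Finset.range (n + 1), (c * ∑ k ∈ Finset.Ico l n, f k) * g l
      = c * ∑ k ∈ Finset.range n, f k * ∑ l ∈ Finset.range (k + 1), g l :=
  calc ∑ l ∈ Finset.range (n + 1), (c * ∑ k ∈ Finset.Ico l n, f k) * g l
      = ∑ l ∈ Finset.range (n + 1), (c * g l) * ∑ k ∈ Finset.Ico l n, f k := by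
        refine Finset.sum_congr rfl fun l _ => ?_; ring
    _ = ∑ k ∈ Finset.range n, f k * ∑ l ∈ Finset.range (k + 1), c * g l := aux_swap n f _
    _ = c * ∑ k ∈ Finset.range n, f k * ∑ l ∈ Finset.range (k + 1), g l := by
        rw [Finset.mul_sum]
        refine Finset.sum_congr rfl fun k _ => ?_
        rw [← Finset.mul_sum]
        ring

/-- the matrix `G(Y)` with
`G(Y)_{ui} = ∑_{(i,p)∈R : u∈p} λ_{(i,p)} ∑_{k'=k_p(u)}^{|p|−1} w(p_{k'+1},p_{k'})·𝟙{∑_{ℓ=1}^{k'} y_{p_ℓ i} ≤ 1}`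
is a supergradient of the concave function `L` at `Y` (paths are simple, so `k_p(u)` is
the unique position of `u` in `p`; 0-based here via `List.indexOf`). -/
theorem stmt8 {V C : Type*} [Fintype V] [Fintype C] [Inhabited V]
    [DecidableEq V] [DecidableEq C]
    (R : Finset (C × List V)) (lam : C × List V → ℝ) (w : V → V → ℝ)
    (hpath : ∀ r ∈ R, r.2 ≠ []) (hlam : ∀ r ∈ R, 0 ≤ lam r) (hw : ∀ u v, 0 ≤ w u v)
    (hsimple : ∀ r ∈ R, r.2.Nodup)
    (Y : V → C → ℝ) :
    ∀ Y' : V → C → ℝ,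
      relaxedGain R lam w Y' ≤ relaxedGain R lam w Y +
        ∑ u : V, ∑ i : C,
          (∑ r ∈ R, if r.1 = i ∧ u ∈ r.2 then
              lam r * ∑ k' ∈ Finset.Ico (r.2.idxOf u) (r.2.length - 1),
                w (r.2.getD (k' + 1) default) (r.2.getD k' default) *
                  (if (∑ l ∈ Finset.range (k' + 1), Y (r.2.getD l default) r.1) ≤ 1
                    then 1 else 0)
            else 0) * (Y' u i - Y u i) := by
  intro Y'
  -- notation
  set Δ : V → C → ℝ := fun u i => Y' u i - Y u i with hΔ
  -- the "per-request" form of the gradient term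
  have key : relaxedGain R lam w Y' ≤ relaxedGain R lam w Y +
      ∑ r ∈ R, lam r * ∑ k ∈ Finset.range (r.2.length - 1),
        (w (r.2.getD (k + 1) default) (r.2.getD k default) *
          (if (∑ l ∈ Finset.range (k + 1), Y (r.2.getD l default) r.1) ≤ 1 then (1:ℝ) else 0)) *
            ∑ l ∈ Finset.range (k + 1), Δ (r.2.getD l default) r.1 := by
    unfold relaxedGain
    rw [← Finset.sum_add_distrib]
    apply Finset.sum_le_sum
    intro r hr
    rw [← mul_add]
    apply mul_le_mul_of_nonneg_left _ (hlam r hr)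
    rw [← Finset.sum_add_distrib]
    apply Finset.sum_le_sum
    intro k _
    have hsum : ∑ k' ∈ Finset.range (k + 1), Y' (r.2.getD k' default) r.1
        = (∑ k' ∈ Finset.range (k + 1), Y (r.2.getD k' default) r.1)
          + ∑ l ∈ Finset.range (k + 1), Δ (r.2.getD l default) r.1 := by
      rw [← Finset.sum_add_distrib]
      exact Finset.sum_congr rfl fun l _ => by simp [hΔ]
    rw [hsum, mul_assoc, ← mul_add]
    apply mul_le_mul_of_nonneg_left _ (hw _ _)
    exact min_superg _ _
  refine key.trans (le_of_eq ?_)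
  congr 1
  -- now prove the equality of the two gradient expressions
  symm
  calc
    ∑ u : V, ∑ i : C,
        (∑ r ∈ R, if r.1 = i ∧ u ∈ r.2 then
            lam r * ∑ k' ∈ Finset.Ico (r.2.idxOf u) (r.2.length - 1),
              w (r.2.getD (k' + 1) default) (r.2.getD k' default) *
                (if (∑ l ∈ Finset.range (k' + 1), Y (r.2.getD l default) r.1) ≤ 1
                  then (1:ℝ) else 0)
          else 0) * (Y' u i - Y u i)
      = ∑ r ∈ R, ∑ u : V, ∑ i : C,
          (if r.1 = i ∧ u ∈ r.2 then
            (lam r * ∑ k' ∈ Finset.Ico (r.2.idxOf u) (r.2.length - 1),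
              w (r.2.getD (k' + 1) default) (r.2.getD k' default) *
                (if (∑ l ∈ Finset.range (k' + 1), Y (r.2.getD l default) r.1) ≤ 1
                  then (1:ℝ) else 0)) * Δ u i
          else 0) := by
        simp_rw [Finset.sum_mul, ite_mul, zero_mul]
        rw [sum_swap3]
    _ = ∑ r ∈ R, ∑ u : V,
          (if u ∈ r.2 then
            (lam r * ∑ k' ∈ Finset.Ico (r.2.idxOf u) (r.2.length - 1),
              w (r.2.getD (k' + 1) default) (r.2.getD k' default) *
                (if (∑ l ∈ Finset.range (k' + 1), Y (r.2.getD l default) r.1) ≤ 1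
                  then (1:ℝ) else 0)) * Δ u r.1
          else 0) := by
        refine Finset.sum_congr rfl fun r _ => Finset.sum_congr rfl fun u _ => ?_
        simp_rw [ite_and]
        rw [Finset.sum_ite_eq]
        simp
    _ = ∑ r ∈ R, lam r * ∑ k ∈ Finset.range (r.2.length - 1),
          (w (r.2.getD (k + 1) default) (r.2.getD k default) *
            (if (∑ l ∈ Finset.range (k + 1), Y (r.2.getD l default) r.1) ≤ 1 then (1:ℝ) else 0)) *
              ∑ l ∈ Finset.range (k + 1), Δ (r.2.getD l default) r.1 := by
        refine Finset.sum_congr rfl fun r hr => ?_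
        have hnd := hsimple r hr
        have hlen : r.2.length - 1 + 1 = r.2.length := by
          have := hpath r hr
          have : 0 < r.2.length := List.length_pos_iff.mpr this
          omega
        simp_rw [← List.mem_toFinset]
        rw [Finset.sum_ite_mem, Finset.univ_inter]
        -- reindex the sum over nodes of the path by positions
        have hre : ∑ u ∈ r.2.toFinset,
            (lam r * ∑ k' ∈ Finset.Ico (r.2.idxOf u) (r.2.length - 1),
              w (r.2.getD (k' + 1) default) (r.2.getD k' default) *
                (if (∑ l ∈ Finset.range (k' + 1), Y (r.2.getD l default) r.1) ≤ 1
                  then (1:ℝ) else 0)) * Δ u r.1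
            = ∑ l ∈ Finset.range r.2.length,
              (lam r * ∑ k' ∈ Finset.Ico l (r.2.length - 1),
                w (r.2.getD (k' + 1) default) (r.2.getD k' default) *
                  (if (∑ l' ∈ Finset.range (k' + 1), Y (r.2.getD l' default) r.1) ≤ 1
                    then (1:ℝ) else 0)) * Δ (r.2.getD l default) r.1 := by
          refine Finset.sum_nbij' (fun u => r.2.idxOf u) (fun l => r.2.getD l default)
            ?_ ?_ ?_ ?_ ?_
          · intro u hu
            rw [Finset.mem_range]
            exact List.idxOf_lt_length_iff.mpr (List.mem_toFinset.mp hu)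
          · intro l hl
            rw [Finset.mem_range] at hl
            simp only [List.mem_toFinset, List.getD_eq_getElem _ _ hl]
            exact List.get_mem _ _
          · intro u hu
            have h1 : r.2.idxOf u < r.2.length :=
              List.idxOf_lt_length_iff.mpr (List.mem_toFinset.mp hu)
            simp only [List.getD_eq_getElem _ _ h1]
            exact List.getElem_idxOf h1
          · intro l hl
            rw [Finset.mem_range] at hl
            simp only [List.getD_eq_getElem _ _ hl]
            exact List.get_idxOf hnd ⟨l, hl⟩
          · intro u hu
            have h1 : r.2.idxOf u < r.2.length :=
              List.idxOf_lt_length_iff.mpr (List.mem_toFinset.mp hu)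
            simp only [List.getD_eq_getElem _ _ h1, List.getElem_idxOf h1]
        rw [hre]
        have ha := aux_swap' (r.2.length - 1) (lam r)
          (fun k => w (r.2.getD (k + 1) default) (r.2.getD k default) *
            (if (∑ l' ∈ Finset.range (k + 1), Y (r.2.getD l' default) r.1) ≤ 1
              then (1:ℝ) else 0))
          (fun l => Δ (r.2.getD l default) r.1)
        rw [hlen] at ha
        exact ha
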